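/- Let G be a graph with vertex set {v₁, …, vₙ} and let k ≤ n be a positive integer. Define the distance space (X, ρ) with X = {p₁, …, p_{k+2}} ∪ {x₁, …, xₙ} (all k + 2 + n points distinct) by: ρ(pᵢ, pⱼ) = |i − j| for all i, j ∈ {1,…,k+2}; ρ(pᵢ, xⱼ) = i + j for all i ∈ {1,…,k+2} and j ∈ {1,…,n}; and for distinct i, j ∈ {1,…,n}, ρ(xᵢ, xⱼ) = |i − j| if vᵢvⱼ is not an edge of G, and ρ(xᵢ, xⱼ) = 0 if vᵢvⱼ is an edge of G. Then G has a vertex cover of size at most k if and only if there exists a set O ⊆ X with |O| ≤ k such that (X \ O, ρ) is 1-embeddable. -/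

import Mathlib

/-- `(X, ρ)` is a distance space: `ρ` is symmetric, nonnegative and vanishes on the
diagonal on the points of `X`. -/
def IsDistance {α : Type*} (X : Finset α) (ρ : α → α → ℝ) : Prop :=
  (∀ x ∈ X, ∀ y ∈ X, ρ x y = ρ y x) ∧ (∀ x ∈ X, ∀ y ∈ X, 0 ≤ ρ x y) ∧ (∀ x ∈ X, ρ x x = 0)

/-- `(X, ρ)` is isometrically embeddable into `ℝ^d`. -/
def IsEmbeddable {α : Type*} (X : Finset α) (ρ : α → α → ℝ) (d : ℕ) : Prop :=
  ∃ φ : α → EuclideanSpace ℝ (Fin d), ∀ x ∈ X, ∀ y ∈ X, ρ x y = dist (φ x) (φ y)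

/-- `(X, ρ)` is strongly `d`-embeddable: `d`-embeddable but (for `d ≥ 1`)
not `(d-1)`-embeddable. -/
def IsStronglyEmbeddable {α : Type*} (X : Finset α) (ρ : α → α → ℝ) (d : ℕ) : Prop :=
  IsEmbeddable X ρ d ∧ (0 < d → ¬ IsEmbeddable X ρ (d - 1))

/-- A nonempty set `Y` with `|Y| = r + 1` is independent if `(Y, ρ)` is strongly
`r`-embeddable. -/
def IsIndependent {α : Type*} (Y : Finset α) (ρ : α → α → ℝ) : Prop :=
  Y.Nonempty ∧ IsStronglyEmbeddable Y ρ (Y.card - 1)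

/-- The distance space of the vertex-cover reduction: points `p₁, …, p_{k+2}` (modelled
as `Sum.inl a` for `a : Fin (k+2)`, with `pᵢ = Sum.inl (i - 1)`) and `x₁, …, xₙ`
(modelled as `Sum.inr b` for `b : Fin n`, with `xⱼ = Sum.inr (j - 1)`). -/
def rhoVC {n : ℕ} (k : ℕ) (G : SimpleGraph (Fin n)) [DecidableRel G.Adj] :
    (Fin (k + 2) ⊕ Fin n) → (Fin (k + 2) ⊕ Fin n) → ℝ
  | Sum.inl a, Sum.inl b => |(a : ℝ) - (b : ℝ)|
  | Sum.inl a, Sum.inr b => ((a : ℝ) + 1) + ((b : ℝ) + 1)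
  | Sum.inr b, Sum.inl a => ((a : ℝ) + 1) + ((b : ℝ) + 1)
  | Sum.inr a, Sum.inr b => if G.Adj a b then 0 else |(a : ℝ) - (b : ℝ)|

lemma dist1 (x y : EuclideanSpace ℝ (Fin 1)) : dist x y = |x 0 - y 0| := by
  rw [EuclideanSpace.dist_eq]
  simp [Real.sqrt_sq_eq_abs, Real.dist_eq]

/-- `G` has a vertex cover of size at most `k` iff the distance space
`rhoVC` admits at most `k` outliers whose removal makes it `1`-embeddable. -/
theorem stmt11 (n k : ℕ) (hk : 1 ≤ k) (hkn : k ≤ n) (G : SimpleGraph (Fin n))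
    [DecidableRel G.Adj] :
    (∃ S : Finset (Fin n), S.card ≤ k ∧ ∀ a b : Fin n, G.Adj a b → a ∈ S ∨ b ∈ S) ↔
      ∃ O : Finset (Fin (k + 2) ⊕ Fin n), O.card ≤ k ∧
        IsEmbeddable (Finset.univ \ O) (rhoVC k G) 1 := by
  constructor
  · rintro ⟨S, hS, hcov⟩
    refine ⟨S.image Sum.inr, Finset.card_image_le.trans hS, ?_⟩
    refine ⟨fun z => WithLp.toLp 2 (fun _ => Sum.elim (fun a : Fin (k+2) => -((a : ℝ) + 1))
      (fun b : Fin n => (b : ℝ) + 1) z), ?_⟩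
    rintro x hx y hy
    rcases x with a | a <;> rcases y with b | b <;>
      rw [dist1] <;> simp only [PiLp.toLp_apply, Sum.elim_inl, Sum.elim_inr, rhoVC]
    · rw [show -((a : ℝ) + 1) - -((b : ℝ) + 1) = -((a : ℝ) - (b : ℝ)) by ring, abs_neg]
    · rw [show -((a : ℝ) + 1) - ((b : ℝ) + 1) = -(((a : ℝ) + 1) + ((b : ℝ) + 1)) by ring,
        abs_neg, abs_of_nonneg (by positivity)]
    · rw [show ((a : ℝ) + 1) - -((b : ℝ) + 1) = ((b : ℝ) + 1) + ((a : ℝ) + 1) by ring,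
        abs_of_nonneg (by positivity)]
    · have ha : a ∉ S := by
        simp only [Finset.mem_sdiff, Finset.mem_image] at hx
        exact fun h => hx.2 ⟨a, h, rfl⟩
      have hb : b ∉ S := by
        simp only [Finset.mem_sdiff, Finset.mem_image] at hy
        exact fun h => hy.2 ⟨b, h, rfl⟩
      have hnadj : ¬ G.Adj a b := fun h => (hcov a b h).elim ha hb
      rw [if_neg hnadj]
      congr 1
      ring
  · rintro ⟨O, hO, φ, hφ⟩
    refine ⟨Finset.univ.filter (fun b => Sum.inr b ∈ O), ?_, ?_⟩
    · refine le_trans ?_ hO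
      apply Finset.card_le_card_of_injOn (fun b => Sum.inr b)
      · intro b hb
        simpa using (Finset.mem_filter.mp hb).2
      · intro b _ c _ h
        exact Sum.inr.inj h
    · intro a b hab
      by_contra hcon
      push_neg at hcon
      obtain ⟨haS, hbS⟩ := hcon
      have haO : Sum.inr a ∉ O := fun h => haS (Finset.mem_filter.mpr ⟨Finset.mem_univ _, h⟩)
      have hbO : Sum.inr b ∉ O := fun h => hbS (Finset.mem_filter.mpr ⟨Finset.mem_univ _, h⟩)
      have ha' : Sum.inr a ∈ Finset.univ \ O := Finset.mem_sdiff.mpr ⟨Finset.mem_univ _, haO⟩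
      have hb' : Sum.inr b ∈ Finset.univ \ O := Finset.mem_sdiff.mpr ⟨Finset.mem_univ _, hbO⟩
      obtain ⟨i, hi⟩ : ∃ i : Fin (k + 2), Sum.inl i ∉ O := by
        by_contra h
        push_neg at h
        have hsub : (Finset.univ.image (Sum.inl : Fin (k + 2) → Fin (k + 2) ⊕ Fin n)) ⊆ O := by
          intro x hx
          obtain ⟨i, _, rfl⟩ := Finset.mem_image.mp hx
          exact h i
        have hcard : k + 2 ≤ O.card := by
          have := Finset.card_le_card hsub
          rwa [Finset.card_image_of_injective _ Sum.inl_injective, Finset.card_univ,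
            Fintype.card_fin] at this
        omega
      have hi' : Sum.inl i ∈ Finset.univ \ O := Finset.mem_sdiff.mpr ⟨Finset.mem_univ _, hi⟩
      have h0 : rhoVC k G (Sum.inr a) (Sum.inr b) = 0 := by
        simp [rhoVC, hab]
      have heq : φ (Sum.inr a) = φ (Sum.inr b) := by
        have := hφ _ ha' _ hb'
        rw [h0] at this
        exact (dist_eq_zero.mp this.symm)
      have h1 := hφ _ hi' _ ha'
      have h2 := hφ _ hi' _ hb'
      rw [heq] at h1
      rw [← h2] at h1
      simp only [rhoVC] at h1
      have : (a : ℝ) = (b : ℝ) := by linarith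
      have : a = b := Fin.ext (by exact_mod_cast this)
      exact G.irrefl (this ▸ hab)
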